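/- Let X be an Archimedean partially ordered vector space with generating cone, and let P be a linear projection on X such that both P and Q := I - P are positive. If x ∈ P(X) and y ∈ Q(X) are both positive, then x and y are disjoint. -/

import Mathlib

/-- Two vectors are disjoint: the upper bounds of {x+y, -x-y} equal those of {x-y, y-x}. -/
def Disj {X : Type*} [AddCommGroup X] [PartialOrder X] (x y : X) : Prop :=
  upperBounds ({x + y, -x - y} : Set X) = upperBounds ({x - y, y - x} : Set X)

theorem range_elems_disjoint {X : Type*} [AddCommGroup X] [PartialOrder X] [IsOrderedAddMonoid X] [Module ℝ X]
    [PosSMulStrictMono ℝ X] [PosSMulReflectLT ℝ X]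
    (harch : ∀ x y : X, (∀ n : ℕ, 0 < n → n • x ≤ y) → x ≤ 0)
    (hgen : ∀ x : X, ∃ a b : X, 0 ≤ a ∧ 0 ≤ b ∧ x = a - b)
    (P : X →ₗ[ℝ] X) (hP : P ∘ₗ P = P)
    (hPpos : ∀ x : X, 0 ≤ x → 0 ≤ P x)
    (hQpos : ∀ x : X, 0 ≤ x → 0 ≤ x - P x)
    (x y : X) (hx : x ∈ Set.range P) (hy : y ∈ Set.range (LinearMap.id - P : X →ₗ[ℝ] X))
    (hxpos : 0 ≤ x) (hypos : 0 ≤ y) :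
    Disj x y := by
  obtain ⟨v, hv⟩ := hx
  obtain ⟨w, hw⟩ := hy
  have hPx : P x = x := by
    rw [← hv, ← LinearMap.comp_apply, hP]
  have hPy : P y = 0 := by
    have hy' : y = w - P w := by
      rw [← hw]; simp
    rw [hy', map_sub, ← LinearMap.comp_apply, hP, sub_self]
  unfold Disj
  ext z
  simp only [upperBounds, Set.mem_setOf_eq, Set.mem_insert_iff, Set.mem_singleton_iff,
    forall_eq_or_imp, forall_eq]
  constructor
  · rintro ⟨h1, h2⟩
    have hxy : 0 ≤ x + y := add_nonneg hxpos hypos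
    constructor
    · calc x - y ≤ x + y := by
            have := add_le_add_left (neg_nonpos_of_nonneg hypos) x
            calc x - y = x + -y := sub_eq_add_neg x y
              _ ≤ x + y := add_le_add_right (neg_le_self hypos) x
        _ ≤ z := h1
    · calc y - x = y + -x := sub_eq_add_neg y x
        _ ≤ y + x := add_le_add_right (neg_le_self hxpos) y
        _ = x + y := add_comm y x
        _ ≤ z := h1
  · rintro ⟨h1, h2⟩
    -- h1 : x - y ≤ z, h2 : y - x ≤ z
    have ha : 0 ≤ z - (x - y) := sub_nonneg.2 h1
    have hb : 0 ≤ z - (y - x) := sub_nonneg.2 h2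
    have hPa : 0 ≤ P (z - (x - y)) := hPpos _ ha
    have hQb : 0 ≤ (z - (y - x)) - P (z - (y - x)) := hQpos _ hb
    have hPa2 : 0 ≤ P z - x := by
      have heq : P (z - (x - y)) = P z - x := by
        rw [map_sub, map_sub, hPx, hPy]; abel
      rwa [heq] at hPa
    have hQb' : 0 ≤ z - y - P z := by
      have : (z - (y - x)) - P (z - (y - x)) = z - y - P z := by
        rw [map_sub, map_sub, hPx, hPy]; abel
      rwa [this] at hQb
    have hsum : 0 ≤ z - (x + y) := by
      have := add_nonneg hPa2 hQb'
      have heq : (P z - x) + (z - y - P z) = z - (x + y) := by abel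
      rwa [heq] at this
    have hz : x + y ≤ z := sub_nonneg.1 hsum
    refine ⟨hz, ?_⟩
    have hxy : 0 ≤ x + y := add_nonneg hxpos hypos
    calc -x - y = -(x + y) := by abel
      _ ≤ x + y := neg_le_self hxy
      _ ≤ z := hz
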